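/- The iterated sum Σ_{ℓ_3 = 3}^{∞} ( Σ_{ℓ_2 = 2}^{ℓ_3 - 1} ( Σ_{ℓ_1 = 1}^{ℓ_2 - 1} 1/(ℓ_1² · ℓ_2² · ℓ_3²) ) ) converges and equals π⁶ / 7! = π⁶/5040. -/

import Mathlib

open Real

noncomputable section MZVAux

namespace MZVAux

/-- `zf n = 1 / n ^ 2` (equals `0` at `n = 0`). -/
def zf (n : ℕ) : ℝ := 1 / (n : ℝ) ^ 2

lemma zf_nonneg (n : ℕ) : 0 ≤ zf n := by unfold zf; positivity

lemma hasSum_zf : HasSum zf (π ^ 2 / 6) := hasSum_zeta_two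

lemma summable_zf : Summable zf := hasSum_zf.summable

lemma tsum_zf : ∑' n, zf n = π ^ 2 / 6 := hasSum_zf.tsum_eq

lemma q_eq (n : ℕ) : zf n * zf n = 1 / (n : ℝ) ^ 4 := by
  simp only [zf, div_mul_div_comm, one_mul, ← pow_add]

lemma c_eq (n : ℕ) : zf n * zf n * zf n = 1 / (n : ℝ) ^ 6 := by
  simp only [zf, div_mul_div_comm, one_mul, ← pow_add]

lemma summable_q : Summable (fun n => zf n * zf n) :=
  hasSum_zeta_four.summable.congr fun n => (q_eq n).symm

lemma q_nonneg (n : ℕ) : 0 ≤ zf n * zf n := mul_nonneg (zf_nonneg n) (zf_nonneg n)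

lemma tsum_q : ∑' n, zf n * zf n = π ^ 4 / 90 := by
  rw [tsum_congr q_eq, hasSum_zeta_four.tsum_eq]

lemma b5 : bernoulli' 5 = 0 := by
  have h : Nat.choose 5 2 = 10 := by decide
  rw [bernoulli'_def]
  norm_num [Finset.sum_range_succ, h]

lemma b6 : bernoulli' 6 = 1/42 := by
  have h : Nat.choose 6 2 = 15 := by decide
  have h3 : Nat.choose 6 3 = 20 := by decide
  have h4 : Nat.choose 6 4 = 15 := by decide
  rw [bernoulli'_def]
  norm_num [Finset.sum_range_succ, h, h3, h4, b5]

lemma zeta6 : HasSum (fun n : ℕ => (1:ℝ) / (n : ℝ) ^ 6) (π ^ 6 / 945) := by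
  have := hasSum_zeta_nat (k := 3) (by norm_num)
  rw [bernoulli_eq_bernoulli'_of_ne_one (by norm_num), b6] at this
  norm_num [Nat.factorial] at this
  convert this using 1
  · funext n; rw [one_div]
  · ring

lemma tsum_c : ∑' n, zf n * zf n * zf n = π ^ 6 / 945 := by
  rw [tsum_congr c_eq, zeta6.tsum_eq]

/-- Strict upper-triangle restriction of the product `b ⊗ c`. -/
def T2 (b c : ℕ → ℝ) : ℕ × ℕ → ℝ := fun p => if p.1 < p.2 then b p.1 * c p.2 else 0

lemma summable_ite2 {b c : ℕ → ℝ} (hb : Summable b) (hc : Summable c)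
    (hb0 : ∀ n, 0 ≤ b n) (hc0 : ∀ n, 0 ≤ c n) (P : ℕ × ℕ → Prop) [DecidablePred P] :
    Summable (fun p : ℕ × ℕ => if P p then b p.1 * c p.2 else 0) := by
  refine Summable.of_nonneg_of_le (fun p => ?_) (fun p => ?_)
    (hb.mul_of_nonneg hc (fun n => hb0 n) (fun n => hc0 n))
  · split_ifs
    · exact mul_nonneg (hb0 _) (hc0 _)
    · exact le_rfl
  · split_ifs
    · exact le_rfl
    · exact mul_nonneg (hb0 _) (hc0 _)

lemma summable_T2 {b c : ℕ → ℝ} (hb : Summable b) (hc : Summable c)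
    (hb0 : ∀ n, 0 ≤ b n) (hc0 : ∀ n, 0 ≤ c n) : Summable (T2 b c) :=
  summable_ite2 hb hc hb0 hc0 _

lemma tsum_diag (b c : ℕ → ℝ) :
    ∑' p : ℕ × ℕ, (if p.1 = p.2 then b p.1 * c p.2 else 0) = ∑' n, b n * c n := by
  have hinj : Function.Injective (fun n : ℕ => ((n, n) : ℕ × ℕ)) :=
    fun m n h => congrArg Prod.fst h
  have hsupp : Function.support (fun p : ℕ × ℕ => if p.1 = p.2 then b p.1 * c p.2 else 0)
      ⊆ Set.range fun n : ℕ => ((n, n) : ℕ × ℕ) := by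
    rintro ⟨i, j⟩ hp
    rcases eq_or_ne i j with h | h
    · subst h; exact ⟨i, rfl⟩
    · exact absurd (if_neg h) hp
  rw [← hinj.tsum_eq hsupp]
  exact tsum_congr fun n => by simp

lemma tsum_low (b c : ℕ → ℝ) :
    ∑' p : ℕ × ℕ, (if p.2 < p.1 then b p.1 * c p.2 else 0) = ∑' p, T2 c b p := by
  rw [← Equiv.tsum_eq (Equiv.prodComm ℕ ℕ) (T2 c b)]
  refine tsum_congr fun p => ?_
  dsimp [T2, Equiv.prodComm]
  split_ifs
  · ring
  · rfl

lemma two_var {b c : ℕ → ℝ} (hb : Summable b) (hc : Summable c)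
    (hb0 : ∀ n, 0 ≤ b n) (hc0 : ∀ n, 0 ≤ c n) :
    (∑' n, b n) * (∑' n, c n) =
      ∑' p, T2 b c p + ∑' n, b n * c n + ∑' p, T2 c b p := by
  rw [Summable.tsum_mul_tsum hb hc (hb.mul_of_nonneg hc (fun n => hb0 n) (fun n => hc0 n))]
  have hpt : ∀ p : ℕ × ℕ, b p.1 * c p.2 = T2 b c p
      + ((if p.1 = p.2 then b p.1 * c p.2 else 0) + (if p.2 < p.1 then b p.1 * c p.2 else 0)) := by
    rintro ⟨i, j⟩
    dsimp [T2]
    rcases Nat.lt_trichotomy i j with h | h | h <;> split_ifs <;> (first | omega | ring1)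
  rw [tsum_congr hpt]
  have S1 : Summable (T2 b c) := summable_T2 hb hc hb0 hc0
  have S2 : Summable (fun p : ℕ × ℕ => if p.1 = p.2 then b p.1 * c p.2 else 0) :=
    summable_ite2 hb hc hb0 hc0 _
  have S3 : Summable (fun p : ℕ × ℕ => if p.2 < p.1 then b p.1 * c p.2 else 0) :=
    summable_ite2 hb hc hb0 hc0 _
  rw [Summable.tsum_add S1 (S2.add S3), Summable.tsum_add S2 S3, tsum_diag, tsum_low]
  ring

/-! ### Three variables -/

/-- Strictly increasing triples restriction. -/
def T3 : ℕ × ℕ × ℕ → ℝ := fun p =>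
  if p.1 < p.2.1 ∧ p.2.1 < p.2.2 then zf p.1 * zf p.2.1 * zf p.2.2 else 0

lemma summable_ite3 (P : ℕ × ℕ × ℕ → Prop) [DecidablePred P] :
    Summable (fun p : ℕ × ℕ × ℕ => if P p then zf p.1 * zf p.2.1 * zf p.2.2 else 0) := by
  have hF2 : Summable (fun p : ℕ × ℕ => zf p.1 * zf p.2) :=
    summable_zf.mul_of_nonneg summable_zf (fun n => zf_nonneg n) (fun n => zf_nonneg n)
  have hF3 : Summable (fun p : ℕ × ℕ × ℕ => zf p.1 * (zf p.2.1 * zf p.2.2)) :=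
    summable_zf.mul_of_nonneg hF2 (fun n => zf_nonneg n)
      (fun p => mul_nonneg (zf_nonneg _) (zf_nonneg _))
  refine Summable.of_nonneg_of_le (fun p => ?_) (fun p => ?_) hF3
  · split_ifs
    · exact mul_nonneg (mul_nonneg (zf_nonneg _) (zf_nonneg _)) (zf_nonneg _)
    · exact le_rfl
  · split_ifs
    · exact le_of_eq (mul_assoc _ _ _)
    · exact mul_nonneg (zf_nonneg _) (mul_nonneg (zf_nonneg _) (zf_nonneg _))

lemma summable_T3 : Summable T3 := summable_ite3 _

lemma five (i j k : ℕ) :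
    zf i * T2 zf zf (j, k) =
      (if i < j ∧ j < k then zf i * zf j * zf k else 0)
    + ((if i = j ∧ j < k then zf i * zf j * zf k else 0)
    + ((if j < i ∧ i < k then zf i * zf j * zf k else 0)
    + ((if i = k ∧ j < k then zf i * zf j * zf k else 0)
    + (if j < k ∧ k < i then zf i * zf j * zf k else 0)))) := by
  dsimp [T2]
  split_ifs <;> (first | omega | ring1)

/-- Equiv swapping the first two coordinates. -/
def eA : ℕ × ℕ × ℕ ≃ ℕ × ℕ × ℕ :=
  ⟨fun p => (p.2.1, p.1, p.2.2), fun p => (p.2.1, p.1, p.2.2), fun p => rfl, fun p => rfl⟩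

/-- Cyclic equiv. -/
def eB : ℕ × ℕ × ℕ ≃ ℕ × ℕ × ℕ :=
  ⟨fun p => (p.2.1, p.2.2, p.1), fun p => (p.2.2, p.1, p.2.1), fun p => rfl, fun p => rfl⟩

lemma piece3 :
    ∑' p : ℕ × ℕ × ℕ, (if p.2.1 < p.1 ∧ p.1 < p.2.2 then zf p.1 * zf p.2.1 * zf p.2.2 else 0)
      = ∑' p, T3 p := by
  rw [← Equiv.tsum_eq eA T3]
  refine tsum_congr fun p => ?_
  dsimp [T3, eA]
  split_ifs
  · ring
  · rfl

lemma piece5 :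
    ∑' p : ℕ × ℕ × ℕ, (if p.2.1 < p.2.2 ∧ p.2.2 < p.1 then zf p.1 * zf p.2.1 * zf p.2.2 else 0)
      = ∑' p, T3 p := by
  rw [← Equiv.tsum_eq eB T3]
  refine tsum_congr fun p => ?_
  dsimp [T3, eB]
  split_ifs
  · ring
  · rfl

lemma piece2 :
    ∑' p : ℕ × ℕ × ℕ, (if p.1 = p.2.1 ∧ p.2.1 < p.2.2 then zf p.1 * zf p.2.1 * zf p.2.2 else 0)
      = ∑' p, T2 (fun n => zf n * zf n) zf p := by
  have hinj : Function.Injective (fun q : ℕ × ℕ => ((q.1, q.1, q.2) : ℕ × ℕ × ℕ)) := by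
    rintro ⟨a, b⟩ ⟨c, d⟩ h
    simp only [Prod.mk.injEq] at h
    exact Prod.ext h.1 h.2.2
  have hsupp : Function.support
      (fun p : ℕ × ℕ × ℕ => if p.1 = p.2.1 ∧ p.2.1 < p.2.2 then zf p.1 * zf p.2.1 * zf p.2.2 else 0)
      ⊆ Set.range fun q : ℕ × ℕ => ((q.1, q.1, q.2) : ℕ × ℕ × ℕ) := by
    rintro ⟨i, j, k⟩ hp
    by_cases h : i = j ∧ j < k
    · exact ⟨(i, k), by simp [h.1]⟩
    · exact absurd (if_neg h) hp
  rw [← hinj.tsum_eq hsupp]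
  refine tsum_congr fun q => ?_
  by_cases h : q.1 < q.2 <;> simp [T2, h]

lemma piece4 :
    ∑' p : ℕ × ℕ × ℕ, (if p.1 = p.2.2 ∧ p.2.1 < p.2.2 then zf p.1 * zf p.2.1 * zf p.2.2 else 0)
      = ∑' p, T2 zf (fun n => zf n * zf n) p := by
  have hinj : Function.Injective (fun q : ℕ × ℕ => ((q.2, q.1, q.2) : ℕ × ℕ × ℕ)) := by
    rintro ⟨a, b⟩ ⟨c, d⟩ h
    simp only [Prod.mk.injEq] at h
    exact Prod.ext h.2.1 h.1
  have hsupp : Function.support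
      (fun p : ℕ × ℕ × ℕ => if p.1 = p.2.2 ∧ p.2.1 < p.2.2 then zf p.1 * zf p.2.1 * zf p.2.2 else 0)
      ⊆ Set.range fun q : ℕ × ℕ => ((q.2, q.1, q.2) : ℕ × ℕ × ℕ) := by
    rintro ⟨i, j, k⟩ hp
    by_cases h : i = k ∧ j < k
    · exact ⟨(j, i), by simp [h.1]⟩
    · exact absurd (if_neg h) hp
  rw [← hinj.tsum_eq hsupp]
  refine tsum_congr fun q => ?_
  by_cases h : q.1 < q.2 <;> simp [T2, h]
  ring

lemma key3 :
    (∑' n, zf n) * (∑' p, T2 zf zf p) =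
      3 * (∑' p, T3 p) + ∑' p, T2 (fun n => zf n * zf n) zf p
        + ∑' p, T2 zf (fun n => zf n * zf n) p := by
  have hT2s : Summable (T2 zf zf) :=
    summable_T2 summable_zf summable_zf zf_nonneg zf_nonneg
  have hT20 : ∀ p : ℕ × ℕ, 0 ≤ T2 zf zf p := by
    intro p
    dsimp [T2]; split_ifs
    · exact mul_nonneg (zf_nonneg _) (zf_nonneg _)
    · exact le_rfl
  rw [Summable.tsum_mul_tsum summable_zf hT2s
    (summable_zf.mul_of_nonneg hT2s (fun n => zf_nonneg n) hT20)]
  have hpt : ∀ x : ℕ × ℕ × ℕ, zf x.1 * T2 zf zf x.2 =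
      (if x.1 < x.2.1 ∧ x.2.1 < x.2.2 then zf x.1 * zf x.2.1 * zf x.2.2 else 0)
    + ((if x.1 = x.2.1 ∧ x.2.1 < x.2.2 then zf x.1 * zf x.2.1 * zf x.2.2 else 0)
    + ((if x.2.1 < x.1 ∧ x.1 < x.2.2 then zf x.1 * zf x.2.1 * zf x.2.2 else 0)
    + ((if x.1 = x.2.2 ∧ x.2.1 < x.2.2 then zf x.1 * zf x.2.1 * zf x.2.2 else 0)
    + (if x.2.1 < x.2.2 ∧ x.2.2 < x.1 then zf x.1 * zf x.2.1 * zf x.2.2 else 0)))) := by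
    rintro ⟨i, j, k⟩
    exact five i j k
  rw [tsum_congr hpt]
  have S1 := summable_ite3 (fun x => x.1 < x.2.1 ∧ x.2.1 < x.2.2)
  have S2 := summable_ite3 (fun x => x.1 = x.2.1 ∧ x.2.1 < x.2.2)
  have S3 := summable_ite3 (fun x => x.2.1 < x.1 ∧ x.1 < x.2.2)
  have S4 := summable_ite3 (fun x => x.1 = x.2.2 ∧ x.2.1 < x.2.2)
  have S5 := summable_ite3 (fun x => x.2.1 < x.2.2 ∧ x.2.2 < x.1)
  rw [Summable.tsum_add S1 (S2.add (S3.add (S4.add S5))), Summable.tsum_add S2 (S3.add (S4.add S5)),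
    Summable.tsum_add S3 (S4.add S5), Summable.tsum_add S4 S5]
  rw [piece2, piece3, piece4, piece5]
  have : ∑' p : ℕ × ℕ × ℕ,
      (if p.1 < p.2.1 ∧ p.2.1 < p.2.2 then zf p.1 * zf p.2.1 * zf p.2.2 else 0) = ∑' p, T3 p :=
    rfl
  rw [this]
  ring

lemma E3_val : ∑' p, T3 p = π ^ 6 / 5040 := by
  have h2 := two_var summable_zf summable_zf zf_nonneg zf_nonneg
  have h3 := two_var summable_q summable_zf q_nonneg zf_nonneg
  have h1 := key3
  rw [tsum_zf, tsum_q] at h2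
  rw [tsum_q, tsum_zf, tsum_c] at h3
  rw [tsum_zf] at h1
  set A := ∑' p, T2 zf zf p with hAdef
  set B := ∑' p, T2 (fun n => zf n * zf n) zf p with hBdef
  set C := ∑' p, T2 zf (fun n => zf n * zf n) p with hCdef
  set E := ∑' p, T3 p with hEdef
  have hA : A = π ^ 4 / 120 := by nlinarith [h2]
  rw [hA] at h1
  nlinarith [h1, h3]

/-! ### Connection with the iterated sum -/

/-- The outer summand of the statement. -/
def F (k : ℕ) : ℝ :=
  ∑ j ∈ Finset.Icc 2 (k - 1), ∑ i ∈ Finset.Icc 1 (j - 1),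
    1 / ((i : ℝ) ^ 2 * (j : ℝ) ^ 2 * (k : ℝ) ^ 2)

lemma F_eq (k : ℕ) :
    F k = ∑ j ∈ Finset.range k, ∑ i ∈ Finset.range j, zf i * zf j * zf k := by
  unfold F
  have hterm : ∀ i j : ℕ,
      1 / ((i : ℝ) ^ 2 * (j : ℝ) ^ 2 * (k : ℝ) ^ 2) = zf i * zf j * zf k := by
    intro i j; simp only [zf, div_mul_div_comm, one_mul]
  have hinner : ∀ j : ℕ,
      ∑ i ∈ Finset.Icc 1 (j - 1), (zf i * zf j * zf k)
        = ∑ i ∈ Finset.range j, zf i * zf j * zf k := by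
    intro j
    apply Finset.sum_subset
    · intro i hi
      simp only [Finset.mem_Icc] at hi
      simp only [Finset.mem_range]
      omega
    · intro i hi hni
      simp only [Finset.mem_Icc, Finset.mem_range, not_and, not_le] at hi hni
      have : i = 0 := by omega
      subst this
      simp [zf]
  calc ∑ j ∈ Finset.Icc 2 (k - 1), ∑ i ∈ Finset.Icc 1 (j - 1),
        1 / ((i : ℝ) ^ 2 * (j : ℝ) ^ 2 * (k : ℝ) ^ 2)
      = ∑ j ∈ Finset.Icc 2 (k - 1), ∑ i ∈ Finset.range j, zf i * zf j * zf k := by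
        refine Finset.sum_congr rfl fun j _ => ?_
        rw [← hinner j]
        exact Finset.sum_congr rfl fun i _ => hterm i j
    _ = ∑ j ∈ Finset.range k, ∑ i ∈ Finset.range j, zf i * zf j * zf k := by
        apply Finset.sum_subset
        · intro j hj
          simp only [Finset.mem_Icc] at hj
          simp only [Finset.mem_range]
          omega
        · intro j hj hnj
          simp only [Finset.mem_range] at hj
          simp only [Finset.mem_Icc, not_and, not_le] at hnj
          have : j < 2 := by omega
          interval_cases j
          · simp
          · simp [zf]

lemma F_zero (k : ℕ) (hk : k < 3) : F k = 0 := by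
  unfold F
  rw [Finset.Icc_eq_empty (by omega), Finset.sum_empty]

lemma sum_eval (k : ℕ) :
    ∑ p ∈ Finset.range k ×ˢ Finset.range k,
      (if p.1 < p.2 ∧ p.2 < k then zf p.1 * zf p.2 * zf k else 0) = F k := by
  rw [Finset.sum_product, Finset.sum_comm, F_eq]
  refine Finset.sum_congr rfl fun j hj => ?_
  have hjk : j < k := Finset.mem_range.mp hj
  calc ∑ i ∈ Finset.range k, (if i < j ∧ j < k then zf i * zf j * zf k else 0)
      = ∑ i ∈ Finset.range k, (if i < j then zf i * zf j * zf k else 0) := by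
        refine Finset.sum_congr rfl fun i _ => ?_
        by_cases h : i < j <;> simp [h, hjk]
    _ = ∑ i ∈ (Finset.range k).filter (· < j), zf i * zf j * zf k :=
        (Finset.sum_filter _ _).symm
    _ = ∑ i ∈ Finset.range j, zf i * zf j * zf k := by
        congr 1
        ext i
        simp only [Finset.mem_filter, Finset.mem_range]
        omega

lemma hasSum_F : HasSum F (∑' p, T3 p) := by
  have hs : Summable (T3 ∘ eB) := (eB.summable_iff).mpr summable_T3
  have hA : HasSum (T3 ∘ eB) (∑' p, T3 p) := by
    have h := hs.hasSum
    rwa [show ∑' x, (T3 ∘ eB) x = ∑' p, T3 p from Equiv.tsum_eq eB T3] at h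
  refine HasSum.prod_fiberwise hA fun k => ?_
  have h0 : ∀ p : ℕ × ℕ, p ∉ Finset.range k ×ˢ Finset.range k →
      (fun p : ℕ × ℕ => (T3 ∘ eB) (k, p)) p = 0 := by
    intro p hp
    simp only [Finset.mem_product, Finset.mem_range, not_and, not_lt] at hp
    show (if p.1 < p.2 ∧ p.2 < k then zf p.1 * zf p.2 * zf k else 0) = 0
    rw [if_neg]
    rintro ⟨h1, h2⟩
    omega
  have h : HasSum _ _ := hasSum_sum_of_ne_finset_zero h0
  rwa [show ∑ p ∈ Finset.range k ×ˢ Finset.range k, (fun p : ℕ × ℕ => (T3 ∘ eB) (k, p)) p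
      = F k from sum_eval k] at h

end MZVAux

end MZVAux

open MZVAux in
theorem stmt_8 :
    Summable (fun ℓ₃ : {m : ℕ // 3 ≤ m} =>
        ∑ ℓ₂ ∈ Finset.Icc 2 ((ℓ₃ : ℕ) - 1), ∑ ℓ₁ ∈ Finset.Icc 1 (ℓ₂ - 1),
          1 / ((ℓ₁ : ℝ) ^ 2 * (ℓ₂ : ℝ) ^ 2 * ((ℓ₃ : ℕ) : ℝ) ^ 2)) ∧
      ∑' ℓ₃ : {m : ℕ // 3 ≤ m},
          ∑ ℓ₂ ∈ Finset.Icc 2 ((ℓ₃ : ℕ) - 1), ∑ ℓ₁ ∈ Finset.Icc 1 (ℓ₂ - 1),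
            1 / ((ℓ₁ : ℝ) ^ 2 * (ℓ₂ : ℝ) ^ 2 * ((ℓ₃ : ℕ) : ℝ) ^ 2) =
        π ^ 6 / 5040 := by
  have hF : HasSum F (π ^ 6 / 5040) := E3_val ▸ hasSum_F
  have hsupp : Function.support F ⊆ {m : ℕ | 3 ≤ m} := by
    intro k hk
    by_contra h
    exact hk (F_zero k (by simpa using h))
  constructor
  · exact hF.summable.subtype {m : ℕ | 3 ≤ m}
  · calc ∑' ℓ₃ : {m : ℕ // 3 ≤ m},
          ∑ ℓ₂ ∈ Finset.Icc 2 ((ℓ₃ : ℕ) - 1), ∑ ℓ₁ ∈ Finset.Icc 1 (ℓ₂ - 1),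
            1 / ((ℓ₁ : ℝ) ^ 2 * (ℓ₂ : ℝ) ^ 2 * ((ℓ₃ : ℕ) : ℝ) ^ 2)
        = ∑' k, F k := tsum_subtype_eq_of_support_subset hsupp
      _ = π ^ 6 / 5040 := hF.tsum_eq
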